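/- Let N be a real n x m matrix of rank d+1 with compact SVD N = U Σ V*, and suppose x in R^{d+1} and y in R^{d+1} are vectors such that all entries of U x and V y are nonzero and <x, Σ^{-1} y> = 1. Then the matrix M = D1 N D2 + J has rank d, where D1 = diag(-Ux)^{-1}, D2 = diag(Vy)^{-1}, and J is the all-ones matrix. -/

import Mathlib

open Matrix

lemma aux_inv_diagonal {k : ℕ} (b : Fin k → ℝ) (hb : ∀ i, b i ≠ 0) :
    (Matrix.diagonal b)⁻¹ = Matrix.diagonal (fun i => (b i)⁻¹) :=
  Matrix.inv_eq_right_inv (by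
    rw [Matrix.diagonal_mul_diagonal,
      show (fun i => b i * (b i)⁻¹) = (fun _ => (1 : ℝ)) from
        funext fun i => mul_inv_cancel₀ (hb i)]
    exact Matrix.diagonal_one)

lemma aux_rank {d : ℕ} (σ : Fin (d+1) → ℝ) (hσ : ∀ i, σ i ≠ 0)
    (x y : Fin (d+1) → ℝ)
    (hxy : ∑ i, x i * ((σ i)⁻¹ * y i) = 1) :
    (Matrix.diagonal σ - Matrix.vecMulVec x y).rank = d := by
  set A := Matrix.diagonal σ - Matrix.vecMulVec x y with hA
  set w : Fin (d+1) → ℝ := fun i => (σ i)⁻¹ * x i with hw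
  have hAz : ∀ z : Fin (d+1) → ℝ, ∀ i, (A *ᵥ z) i = σ i * z i - x i * (∑ j, y j * z j) := by
    intro z i
    simp [hA, Matrix.sub_mulVec, Matrix.mulVec, dotProduct, Matrix.diagonal_apply,
      Matrix.vecMulVec_apply, sub_mul, Finset.sum_sub_distrib, Finset.sum_ite_eq,
      Finset.mul_sum, mul_assoc]
  have hyw : ∑ i, y i * w i = 1 := by
    rw [← hxy]; exact Finset.sum_congr rfl fun i _ => by rw [hw]; ring
  have hker : LinearMap.ker A.mulVecLin = Submodule.span ℝ {w} := by
    apply le_antisymm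
    · intro z hz
      rw [LinearMap.mem_ker] at hz
      have hz' : ∀ i, σ i * z i - x i * (∑ j, y j * z j) = 0 := by
        intro i; rw [← hAz z i]
        simpa using congrFun hz i
      have : z = (∑ j, y j * z j) • w := by
        funext i
        have h := hz' i
        have := hσ i
        simp only [Pi.smul_apply, smul_eq_mul, hw]
        have e : z i = (σ i)⁻¹ * (x i * ∑ j, y j * z j) := by
          rw [eq_inv_mul_iff_mul_eq₀ this]; linarith [hz' i]
        rw [e]; ring
      rw [this]
      exact Submodule.smul_mem _ _ (Submodule.mem_span_singleton_self w)
    · rw [Submodule.span_le, Set.singleton_subset_iff]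
      rw [SetLike.mem_coe, LinearMap.mem_ker]
      funext i
      rw [Matrix.mulVecLin_apply, hAz w i, hyw]
      have := hσ i
      simp only [hw, Pi.zero_apply]
      rw [← mul_assoc, mul_inv_cancel₀ this, one_mul, mul_one, sub_self]
  have hwne : w ≠ 0 := by
    intro h
    rw [h] at hyw
    simp at hyw
  have h1 : Module.finrank ℝ (LinearMap.ker A.mulVecLin) = 1 := by
    rw [hker]; exact finrank_span_singleton hwne
  have h2 := LinearMap.finrank_range_add_finrank_ker A.mulVecLin
  rw [h1, Module.finrank_fin_fun] at h2
  have : A.rank = Module.finrank ℝ (LinearMap.range A.mulVecLin) := rfl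
  omega

lemma rank_ortho_left {n k : ℕ} {m : Type*} [Fintype m]
    (U : Matrix (Fin n) (Fin k) ℝ) (hU : Uᵀ * U = 1)
    (A : Matrix (Fin k) m ℝ) : (U * A).rank = A.rank := by
  refine le_antisymm (Matrix.rank_mul_le_right U A) ?_
  calc A.rank = (Uᵀ * (U * A)).rank := by rw [← Matrix.mul_assoc, hU, Matrix.one_mul]
    _ ≤ (U * A).rank := Matrix.rank_mul_le_right _ _

lemma rank_ortho_right {n k : ℕ} {m : Type*} [Fintype m]
    (V : Matrix (Fin n) (Fin k) ℝ) (hV : Vᵀ * V = 1)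
    (B : Matrix m (Fin k) ℝ) : (B * Vᵀ).rank = B.rank := by
  refine le_antisymm (Matrix.rank_mul_le_left B Vᵀ) ?_
  calc B.rank = (B * Vᵀ * V).rank := by rw [Matrix.mul_assoc, hV, Matrix.mul_one]
    _ ≤ (B * Vᵀ).rank := Matrix.rank_mul_le_left _ _

lemma sandwich {n m k : ℕ} (U : Matrix (Fin n) (Fin k) ℝ) (V : Matrix (Fin m) (Fin k) ℝ)
    (x y : Fin k → ℝ) :
    U * Matrix.vecMulVec x y * Vᵀ = Matrix.vecMulVec (U *ᵥ x) (V *ᵥ y) := by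
  rw [Matrix.vecMulVec_eq (Fin 1), Matrix.vecMulVec_eq (Fin 1), Matrix.replicateCol_mulVec,
    ← Matrix.vecMul_transpose, Matrix.replicateRow_vecMul, Matrix.mul_assoc, Matrix.mul_assoc,
    Matrix.mul_assoc]

/-- If `N = U Σ Vᵀ` has rank `d + 1` and `x`, `y` are such that `U x` and `V y` have no
zero entries and `⟨x, Σ⁻¹ y⟩ = 1`, then `D₁ N D₂ + 𝟙` has rank `d`, where
`D₁ = diag(-Ux)⁻¹`, `D₂ = diag(Vy)⁻¹` and `𝟙` is the all-ones matrix. -/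
theorem stmt11 {n m d : ℕ}
    (U : Matrix (Fin n) (Fin (d + 1)) ℝ) (V : Matrix (Fin m) (Fin (d + 1)) ℝ)
    (σ : Fin (d + 1) → ℝ) (hσ : ∀ i, 0 < σ i)
    (hU : Uᵀ * U = 1) (hV : Vᵀ * V = 1)
    (N : Matrix (Fin n) (Fin m) ℝ) (hN : N = U * Matrix.diagonal σ * Vᵀ)
    (hrank : N.rank = d + 1)
    (x y : Fin (d + 1) → ℝ)
    (hx : ∀ i, (U *ᵥ x) i ≠ 0) (hy : ∀ i, (V *ᵥ y) i ≠ 0)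
    (hxy : x ⬝ᵥ ((Matrix.diagonal σ)⁻¹ *ᵥ y) = 1) :
    ((Matrix.diagonal (-(U *ᵥ x)))⁻¹ * N * (Matrix.diagonal (V *ᵥ y))⁻¹ +
      Matrix.of fun _ _ => (1 : ℝ)).rank = d := by
  set b := -(U *ᵥ x) with hbdef
  set c := V *ᵥ y with hcdef
  have hb : ∀ i, b i ≠ 0 := fun i => by
    simp only [hbdef, Pi.neg_apply, ne_eq, neg_eq_zero]; exact hx i
  have hσ' : ∀ i, σ i ≠ 0 := fun i => (hσ i).ne'
  have hD1 := aux_inv_diagonal b hb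
  have hD2 := aux_inv_diagonal c hy
  -- the key factorization
  have key : (Matrix.diagonal b)⁻¹ * N * (Matrix.diagonal c)⁻¹ +
      Matrix.of (fun _ _ => (1 : ℝ)) =
      (Matrix.diagonal b)⁻¹ * (N + Matrix.vecMulVec b c) * (Matrix.diagonal c)⁻¹ := by
    rw [hD1, hD2]
    ext i j
    rw [Matrix.add_apply, Matrix.mul_diagonal, Matrix.mul_diagonal, Matrix.diagonal_mul,
      Matrix.diagonal_mul, Matrix.add_apply, Matrix.vecMulVec_apply, Matrix.of_apply]
    have h1 := hb i
    have h2 := hy j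
    field_simp
  rw [key]
  have hdet1 : IsUnit ((Matrix.diagonal b)⁻¹).det := by
    rw [hD1, Matrix.det_diagonal, isUnit_iff_ne_zero]
    exact Finset.prod_ne_zero_iff.2 fun i _ => inv_ne_zero (hb i)
  have hdet2 : IsUnit ((Matrix.diagonal c)⁻¹).det := by
    rw [hD2, Matrix.det_diagonal, isUnit_iff_ne_zero]
    exact Finset.prod_ne_zero_iff.2 fun i _ => inv_ne_zero (hy i)
  rw [Matrix.rank_mul_eq_left_of_isUnit_det _ _ hdet2,
    Matrix.rank_mul_eq_right_of_isUnit_det _ _ hdet1]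
  have hW : N + Matrix.vecMulVec b c =
      U * (Matrix.diagonal σ - Matrix.vecMulVec x y) * Vᵀ := by
    rw [Matrix.mul_sub, Matrix.sub_mul, sandwich, hN, hbdef]
    have : Matrix.vecMulVec (-(U *ᵥ x)) c = -Matrix.vecMulVec (U *ᵥ x) c := by
      ext i j; simp [Matrix.vecMulVec_apply]
    rw [this, hcdef]
    abel
  rw [hW, rank_ortho_right V hV, rank_ortho_left U hU]
  apply aux_rank σ hσ' x y
  rw [← hxy, aux_inv_diagonal σ hσ']
  simp [dotProduct, Matrix.mulVec_diagonal]
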